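/- For any h ≥ 1 and any real numbers b_1, …, b_{2h} extended periodically with period 2h, one has h + Σ_{m=1}^{2h} Σ_{j=1}^{2h−1} (−1)^j Π_{i=m}^{m+j−1} b_i + h Π_{i=1}^{2h} b_i = Σ_{l=1}^{h} Σ_{j=0}^{2h−1} (−1)^j Π_{k=2l+1}^{2l+j} b_k + Σ_{l=1}^{h} Σ_{j=0}^{2h−1} (−1)^{j+1} Π_{k=2l}^{2l+j} b_k. -/

import Mathlib

open Finset

private lemma pair_sum (g : ℕ → ℝ) (n : ℕ) :
    ∑ l ∈ Finset.Icc 1 n, (g (2*l) + g (2*l+1)) = ∑ m ∈ Finset.Icc 2 (2*n+1), g m := by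
  induction n with
  | zero => simp
  | succ n ih =>
      rw [Finset.sum_Icc_succ_top (by omega : 1 ≤ n+1), ih,
        show 2*(n+1)+1 = (2*n+2)+1 by ring,
        Finset.sum_Icc_succ_top (by omega : 2 ≤ (2*n+2)+1),
        show 2*n+2 = (2*n+1)+1 by ring,
        Finset.sum_Icc_succ_top (by omega : 2 ≤ (2*n+1)+1)]
      ring_nf

private lemma prod_shift (h : ℕ) (b : ℕ → ℝ) (hbper : ∀ i, b (i + 2 * h) = b i) (a c : ℕ) :
    ∏ i ∈ Finset.Icc (a + 2*h) (c + 2*h), b i = ∏ i ∈ Finset.Icc a c, b i := by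
  rw [← Finset.map_add_right_Icc, Finset.prod_map]
  simp [hbper]

private lemma prod_period (h : ℕ) (hh : 1 ≤ h) (b : ℕ → ℝ) (hbper : ∀ i, b (i + 2 * h) = b i) :
    ∀ m, 1 ≤ m → ∏ i ∈ Finset.Icc m (m + 2*h - 1), b i = ∏ i ∈ Finset.Icc 1 (2*h), b i := by
  intro m hm
  induction m with
  | zero => omega
  | succ m ih =>
      rcases Nat.eq_or_lt_of_le hm with h1 | h1
      · rw [show m + 1 + 2*h - 1 = 2*h by omega, show m + 1 = 1 by omega]
      · have hm' : 1 ≤ m := by omega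
        rw [← ih hm']
        rw [show m + 1 + 2*h - 1 = (m + 2*h - 1) + 1 by omega,
          Finset.prod_Icc_succ_top (by omega : m + 1 ≤ (m + 2*h - 1) + 1),
          show (m + 2*h - 1) + 1 = m + 2*h by omega, hbper m,
          ← Finset.insert_Icc_add_one_left_eq_Icc (by omega : m ≤ m + 2*h - 1),
          Finset.prod_insert (by simp)]
        ring

theorem Q_rewriting_identity
    (h : ℕ) (hh : 1 ≤ h) (b : ℕ → ℝ) (hbper : ∀ i, b (i + 2 * h) = b i) :
    (h : ℝ)
        + (∑ m ∈ Finset.Icc 1 (2 * h), ∑ j ∈ Finset.Icc 1 (2 * h - 1),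
            (-1 : ℝ) ^ j * ∏ i ∈ Finset.Icc m (m + j - 1), b i)
        + (h : ℝ) * ∏ i ∈ Finset.Icc 1 (2 * h), b i
      = (∑ l ∈ Finset.Icc 1 h, ∑ j ∈ Finset.Icc 0 (2 * h - 1),
            (-1 : ℝ) ^ j * ∏ k ∈ Finset.Icc (2 * l + 1) (2 * l + j), b k)
        + ∑ l ∈ Finset.Icc 1 h, ∑ j ∈ Finset.Icc 0 (2 * h - 1),
            (-1 : ℝ) ^ (j + 1) * ∏ k ∈ Finset.Icc (2 * l) (2 * l + j), b k := by
  set S : ℕ → ℝ := fun m => ∑ j ∈ Finset.Icc 1 (2 * h - 1),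
      (-1 : ℝ) ^ j * ∏ i ∈ Finset.Icc m (m + j - 1), b i with hS
  set P : ℝ := ∏ i ∈ Finset.Icc 1 (2 * h), b i with hP
  -- first RHS inner sum
  have hsum1 : ∀ l, (∑ j ∈ Finset.Icc 0 (2 * h - 1),
      (-1 : ℝ) ^ j * ∏ k ∈ Finset.Icc (2 * l + 1) (2 * l + j), b k) = 1 + S (2*l+1) := by
    intro l
    rw [← Finset.insert_Icc_add_one_left_eq_Icc (by omega : 0 ≤ 2*h-1), Finset.sum_insert (by simp)]
    simp only [pow_zero, one_mul]
    rw [show Finset.Icc (2*l+1) (2*l+0) = ∅ by simp, Finset.prod_empty]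
    congr 1
    simp only [hS]
    apply Finset.sum_congr rfl
    intro j hj
    simp only [Finset.mem_Icc] at hj
    rw [show 2*l+1+j-1 = 2*l+j by omega]
  -- second RHS inner sum
  have hsum2 : ∀ l, 1 ≤ l → (∑ j ∈ Finset.Icc 0 (2 * h - 1),
      (-1 : ℝ) ^ (j + 1) * ∏ k ∈ Finset.Icc (2 * l) (2 * l + j), b k) = S (2*l) + P := by
    intro l hl
    have e1 : (∑ j ∈ Finset.Icc 0 (2 * h - 1),
        (-1 : ℝ) ^ (j + 1) * ∏ k ∈ Finset.Icc (2 * l) (2 * l + j), b k)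
        = ∑ j ∈ Finset.Icc 1 (2*h), (-1 : ℝ) ^ j * ∏ k ∈ Finset.Icc (2*l) (2*l + j - 1), b k := by
      rw [show Finset.Icc 1 (2*h) = (Finset.Icc 0 (2*h-1)).map (addRightEmbedding 1) by
        rw [Finset.map_add_right_Icc]; congr 1; omega]
      rw [Finset.sum_map]
      apply Finset.sum_congr rfl
      intro j hj
      simp only [addRightEmbedding_apply]
      rw [show 2*l + (j+1) - 1 = 2*l + j by omega]
    rw [e1, show 2*h = (2*h-1)+1 by omega,
      Finset.sum_Icc_succ_top (by omega : 1 ≤ (2*h-1)+1)]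
    have hpow : (-1 : ℝ) ^ ((2*h-1)+1) = 1 := Even.neg_one_pow ⟨h, by omega⟩
    rw [hpow, one_mul, show 2*l + ((2*h-1)+1) - 1 = 2*l + 2*h - 1 by omega,
      prod_period h hh b hbper (2*l) (by omega)]
  -- S is periodic
  have hShift : S (2*h+1) = S 1 := by
    simp only [hS]
    apply Finset.sum_congr rfl
    intro j hj
    simp only [Finset.mem_Icc] at hj
    rw [show 2*h+1 = 1 + 2*h by ring, show 1 + 2*h + j - 1 = j + 2*h by omega,
      prod_shift h b hbper 1 j, show (1:ℕ) + j - 1 = j by omega]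
  -- key regrouping
  have key : ∑ m ∈ Finset.Icc 1 (2*h), S m = ∑ l ∈ Finset.Icc 1 h, (S (2*l) + S (2*l+1)) := by
    rw [pair_sum, Finset.sum_Icc_succ_top (by omega : 2 ≤ 2*h+1), hShift,
      ← Finset.insert_Icc_add_one_left_eq_Icc (by omega : 1 ≤ 2*h), Finset.sum_insert (by simp)]
    ring
  -- assemble
  have lhs_eq : (∑ m ∈ Finset.Icc 1 (2 * h), ∑ j ∈ Finset.Icc 1 (2 * h - 1),
      (-1 : ℝ) ^ j * ∏ i ∈ Finset.Icc m (m + j - 1), b i) = ∑ m ∈ Finset.Icc 1 (2*h), S m := rfl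
  rw [lhs_eq, Finset.sum_congr rfl (fun l _ => hsum1 l),
    Finset.sum_congr rfl (fun l hl => hsum2 l (by simp only [Finset.mem_Icc] at hl; omega)),
    Finset.sum_add_distrib, Finset.sum_add_distrib, Finset.sum_const, Finset.sum_const,
    Nat.card_Icc, key, Finset.sum_add_distrib]
  simp only [Nat.add_sub_cancel, nsmul_eq_mul, mul_one, smul_eq_mul]
  ring
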